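/- For all integers n ≥ 1 and l ≥ 1, the element (Σ_{i=1}^n u_i z_i^{n−1})^{l+1} of ℂ[u₁, …, u_n, z₁, …, z_n] lies in the ideal generated by u₁^{l+1}, …, u_n^{l+1} together with the elementary symmetric polynomials e₁(z₁, …, z_n), …, e_n(z₁, …, z_n). (Equivalently, in the quotient ring ℂ[u, z]/(u₁^{l+1}, …, u_n^{l+1}), the element ft^{n−1} = Σ_i u_i z_i^{n−1} satisfies (ft^{n−1})^{l+1} ∈ (ℂ[z₁, …, z_n]_+^{S_n}), the ideal generated by symmetric polynomials in the z's with zero constant term.) -/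
import Mathlib


open scoped BigOperators
open MvPolynomial

/-- The `k`-th elementary symmetric polynomial in the variables `z₁, …, z_n`, viewed
inside `ℂ[u₁, …, u_n, z₁, …, z_n]` (with `u i = X (inl i)`, `z i = X (inr i)`). -/
noncomputable def esymmZ (n : ℕ) (k : ℕ) : MvPolynomial (Fin n ⊕ Fin n) ℂ :=
  MvPolynomial.rename (Sum.inr : Fin n → Fin n ⊕ Fin n) (MvPolynomial.esymm (Fin n) ℂ k)

/-- If `x * y = 0` in a commutative ring, then `(x+y)^m = x^m + y^m` for `m ≥ 1`. -/
lemma add_pow_of_mul_eq_zero {A : Type*} [CommRing A] {x y : A} (h : x * y = 0)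
    {m : ℕ} (hm : 1 ≤ m) : (x + y) ^ m = x ^ m + y ^ m := by
  induction m, hm using Nat.le_induction with
  | base => simp
  | succ m hm ih =>
    have hx : x * y ^ m = 0 := by
      obtain ⟨m', rfl⟩ := Nat.exists_eq_add_of_le hm
      rw [pow_add, pow_one, ← mul_assoc, h, zero_mul]
    have hy : y * x ^ m = 0 := by
      obtain ⟨m', rfl⟩ := Nat.exists_eq_add_of_le hm
      rw [pow_add, pow_one, ← mul_assoc, mul_comm y x, h, zero_mul]
    calc (x + y) ^ (m + 1) = (x + y) * (x + y) ^ m := by ring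
    _ = (x + y) * (x ^ m + y ^ m) := by rw [ih]
    _ = x ^ (m+1) + (x * y ^ m + (y * x ^ m + y ^ (m+1))) := by ring
    _ = x ^ (m+1) + y ^ (m+1) := by rw [hx, hy]; ring

/-- Power of a sum of pairwise-orthogonal elements. -/
lemma sum_pow_of_pairwise_mul_eq_zero {A ι : Type*} [CommRing A] (s : Finset ι) (a : ι → A)
    (h : ∀ i ∈ s, ∀ j ∈ s, i ≠ j → a i * a j = 0) {m : ℕ} (hm : 1 ≤ m) :
    (∑ i ∈ s, a i) ^ m = ∑ i ∈ s, a i ^ m := by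
  classical
  induction s using Finset.cons_induction with
  | empty => simp [zero_pow (by omega : m ≠ 0)]
  | cons x s hx ih =>
    rw [Finset.sum_cons, Finset.sum_cons]
    have hxs : a x * ∑ i ∈ s, a i = 0 := by
      rw [Finset.mul_sum]
      refine Finset.sum_eq_zero fun i hi => ?_
      exact h x (Finset.mem_cons_self x s) i (Finset.mem_cons_of_mem hi)
        (fun e => hx (e ▸ hi))
    rw [add_pow_of_mul_eq_zero hxs hm, ih (fun i hi j hj hij =>
      h i (Finset.mem_cons_of_mem hi) j (Finset.mem_cons_of_mem hj) hij)]

/-- If `∏ i, (X + C (c i)) = X ^ n`, then `c i ^ (n-1) * c j ^ (n-1) = 0` for `i ≠ j`. -/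
lemma key_lemma {A : Type*} [CommRing A] {n : ℕ} (hn : 1 ≤ n) (c : Fin n → A)
    (hprod : ∏ i : Fin n, (Polynomial.X + Polynomial.C (c i)) = Polynomial.X ^ n)
    {i j : Fin n} (hij : i ≠ j) : c i ^ (n - 1) * c j ^ (n - 1) = 0 := by
  -- each (-c i)^n = 0
  have hc : ∀ i : Fin n, (-c i) ^ n = 0 := by
    intro i
    have := congrArg (Polynomial.eval (-c i)) hprod
    simp only [Polynomial.eval_prod, Polynomial.eval_add, Polynomial.eval_X,
      Polynomial.eval_C, Polynomial.eval_pow] at this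
    rw [← this, Finset.prod_eq_zero (Finset.mem_univ i) (by ring)]
  -- factor out (X + C (c i))
  have hfac : (Polynomial.X + Polynomial.C (c i)) * ∏ m ∈ Finset.univ.erase i,
      (Polynomial.X + Polynomial.C (c m)) = Polynomial.X ^ n :=
    (Finset.mul_prod_erase Finset.univ
      (fun m => Polynomial.X + Polynomial.C (c m)) (Finset.mem_univ i)).trans hprod
  -- geometric sum identity
  have hgeom : (Polynomial.X + Polynomial.C (c i)) *
      (∑ a ∈ Finset.range n, Polynomial.X ^ a * Polynomial.C ((-c i) ^ (n - 1 - a))) =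
      Polynomial.X ^ n := by
    have := geom_sum₂_mul (Polynomial.X : Polynomial A) (Polynomial.C (-c i)) n
    simp only [← Polynomial.C_pow] at this
    rw [mul_comm]
    rw [show (Polynomial.X : Polynomial A) - Polynomial.C (-c i) =
      Polynomial.X + Polynomial.C (c i) by rw [Polynomial.C_neg]; ring] at this
    rw [this, hc i, Polynomial.C_0, sub_zero]
  have hq : ∏ m ∈ Finset.univ.erase i, (Polynomial.X + Polynomial.C (c m)) =
      ∑ a ∈ Finset.range n, Polynomial.X ^ a * Polynomial.C ((-c i) ^ (n - 1 - a)) :=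
    (Polynomial.monic_X_add_C (c i)).isRegular.left (hfac.trans hgeom.symm)
  -- evaluate at -c j
  have hev : ∑ a ∈ Finset.range n, (-c j) ^ a * (-c i) ^ (n - 1 - a) = 0 := by
    have := congrArg (Polynomial.eval (-c j)) hq
    simp only [Polynomial.eval_prod, Polynomial.eval_add, Polynomial.eval_X,
      Polynomial.eval_C, Polynomial.eval_finset_sum, Polynomial.eval_mul,
      Polynomial.eval_pow] at this
    rw [← this, Finset.prod_eq_zero (Finset.mem_erase.2 ⟨hij.symm, Finset.mem_univ j⟩)
      (by ring)]
  -- multiply by (-c i)^(n-1)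
  have hmul : (∑ a ∈ Finset.range n, (-c j) ^ a * (-c i) ^ (n - 1 - a)) * (-c i) ^ (n - 1)
      = (-c j) ^ (n - 1) * (-c i) ^ (n - 1) := by
    rw [Finset.sum_mul]
    rw [Finset.sum_eq_single (n - 1)]
    · rw [Nat.sub_self, pow_zero, mul_one]
    · intro a ha hne
      rw [Finset.mem_range] at ha
      have h1 : n - 1 - a + (n - 1) = n + (n - 1 - a + (n - 1) - n) := by omega
      rw [mul_assoc, ← pow_add, h1, pow_add, hc i, zero_mul, mul_zero]
    · intro h; exact absurd (Finset.mem_range.2 (by omega)) h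
  rw [hev, zero_mul] at hmul
  have hmul' : c j ^ (n-1) * c i ^ (n-1) = 0 := by
    rcases Nat.even_or_odd (n-1) with he | ho
    · rw [he.neg_pow, he.neg_pow] at hmul; exact hmul.symm
    · rw [ho.neg_pow, ho.neg_pow, neg_mul_neg] at hmul; exact hmul.symm
  rw [mul_comm]; exact hmul'



/-- for all `n ≥ 1` and `l ≥ 1`, the element
`(Σ_{i=1}^n u_i z_i^{n-1})^{l+1}` of `ℂ[u₁, …, u_n, z₁, …, z_n]` lies in the ideal
generated by `u₁^{l+1}, …, u_n^{l+1}` together with the elementary symmetric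
polynomials `e₁(z), …, e_n(z)`. -/
theorem ft_power_mem_ideal (n l : ℕ) (hn : 1 ≤ n) (hl : 1 ≤ l) :
    (∑ i : Fin n, X (Sum.inl i) * X (Sum.inr i) ^ (n - 1)) ^ (l + 1) ∈
      Ideal.span
        ((Set.range fun i : Fin n =>
            (X (Sum.inl i) : MvPolynomial (Fin n ⊕ Fin n) ℂ) ^ (l + 1)) ∪
          {p : MvPolynomial (Fin n ⊕ Fin n) ℂ | ∃ k : ℕ, 1 ≤ k ∧ k ≤ n ∧ p = esymmZ n k}) := by
  classical
  set I : Ideal (MvPolynomial (Fin n ⊕ Fin n) ℂ) := Ideal.span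
        ((Set.range fun i : Fin n =>
            (X (Sum.inl i) : MvPolynomial (Fin n ⊕ Fin n) ℂ) ^ (l + 1)) ∪
          {p : MvPolynomial (Fin n ⊕ Fin n) ℂ | ∃ k : ℕ, 1 ≤ k ∧ k ≤ n ∧ p = esymmZ n k})
    with hI
  rw [← Ideal.Quotient.eq_zero_iff_mem]
  set π : MvPolynomial (Fin n ⊕ Fin n) ℂ →ₐ[ℂ] (MvPolynomial (Fin n ⊕ Fin n) ℂ ⧸ I) :=
    Ideal.Quotient.mkₐ ℂ I with hπ
  set ζ : Fin n → (MvPolynomial (Fin n ⊕ Fin n) ℂ ⧸ I) := fun i => π (X (Sum.inr i)) with hζ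
  -- the u_i^{l+1} vanish
  have hu : ∀ i : Fin n, π (X (Sum.inl i)) ^ (l + 1) = 0 := by
    intro i
    rw [← map_pow]
    exact Ideal.Quotient.eq_zero_iff_mem.2 (Ideal.subset_span (Or.inl ⟨i, rfl⟩))
  -- the elementary symmetric polynomials vanish
  have he : ∀ k : ℕ, 1 ≤ k → k ≤ n → aeval ζ (esymm (Fin n) ℂ k) = 0 := by
    intro k h1 h2
    have hπq : ∀ q : MvPolynomial (Fin n ⊕ Fin n) ℂ, π q = aeval (fun v => π (X v)) q := by
      intro q
      conv_lhs => rw [MvPolynomial.aeval_unique π]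
      rfl
    have : π (esymmZ n k) = 0 :=
      Ideal.Quotient.eq_zero_iff_mem.2 (Ideal.subset_span (Or.inr ⟨k, h1, h2, rfl⟩))
    rw [hπq, esymmZ, MvPolynomial.aeval_rename] at this
    exact this
  -- Vieta: the product of (X + C (ζ i)) is X ^ n in the quotient
  have hprod : ∏ i : Fin n, (Polynomial.X + Polynomial.C (ζ i)) = Polynomial.X ^ n := by
    have hV := congrArg (Polynomial.map
        (MvPolynomial.aeval (R := ℂ) ζ).toRingHom)
      (MvPolynomial.prod_C_add_X_eq_sum_esymm ℂ (Fin n))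
    simp only [Polynomial.map_prod, Polynomial.map_add, Polynomial.map_X, Polynomial.map_C,
      Polynomial.map_sum, Polynomial.map_mul, Polynomial.map_pow, AlgHom.coe_toRingHom,
      AlgHom.toRingHom_eq_coe, RingHom.coe_coe,
      MvPolynomial.aeval_X, Fintype.card_fin] at hV
    rw [hV, Finset.sum_eq_single 0]
    · simp [MvPolynomial.esymm_zero]
    · intro j hj hj0
      rw [he j (by omega) (by have := Finset.mem_range.1 hj; omega)]
      simp
    · intro h; exact absurd (Finset.mem_range.2 (by omega)) h
  -- pairwise orthogonality
  have hzz : ∀ i j : Fin n, i ≠ j → ζ i ^ (n - 1) * ζ j ^ (n - 1) = 0 := by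
    intro i j hij
    exact key_lemma hn ζ hprod hij
  -- the summands
  set a : Fin n → (MvPolynomial (Fin n ⊕ Fin n) ℂ ⧸ I) :=
    fun i => π (X (Sum.inl i)) * ζ i ^ (n - 1) with ha
  have hpair : ∀ i ∈ Finset.univ, ∀ j ∈ Finset.univ, i ≠ j → a i * a j = 0 := by
    intro i _ j _ hij
    calc a i * a j
        = (π (X (Sum.inl i)) * π (X (Sum.inl j))) * (ζ i ^ (n-1) * ζ j ^ (n-1)) := by
          rw [ha]; ring
      _ = 0 := by rw [hzz i j hij, mul_zero]
  have hapow : ∀ i : Fin n, a i ^ (l + 1) = 0 := by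
    intro i
    rw [ha]
    rw [mul_pow, hu i, zero_mul]
  -- conclude
  show π ((∑ i : Fin n, X (Sum.inl i) * X (Sum.inr i) ^ (n - 1)) ^ (l + 1)) = 0
  rw [map_pow, map_sum]
  simp only [map_mul, map_pow]
  rw [sum_pow_of_pairwise_mul_eq_zero Finset.univ a hpair (by omega : 1 ≤ l + 1)]
  exact Finset.sum_eq_zero fun i _ => hapow i
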